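/- Let N ≥ 1, τ ≥ 1, p̄ ≥ 1, and p̃_1, …, p̃_τ ∈ ℝ^{N+1} with ‖p̃_t‖_2^2 ≤ (N+1) p̄^2 for all t. Define Λ_1 = (N+1)·I_{N+1} and Λ_{t+1} = Λ_t + p̃_t p̃_tᵀ. Then Σ_{t=1}^τ min{1, √(p̃_tᵀ Λ_t^{-1} p̃_t)} ≤ √( 2 τ (N+1) ln(N + 1 + p̄^2 τ) ). -/

import Mathlib

open Matrix

lemma fin_telescope {M : Type*} [AddCommGroup M] : ∀ {n : ℕ} (g : Fin (n + 1) → M),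
    ∑ i : Fin n, (g i.succ - g i.castSucc) = g (Fin.last n) - g 0 := by
  intro n
  induction n with
  | zero => simp
  | succ m ih =>
    intro g
    rw [Fin.sum_univ_castSucc]
    have h := ih (fun j : Fin (m + 1) => g j.castSucc)
    simp only [Fin.succ_castSucc] at h ⊢
    rw [show ∑ i : Fin m, (g (i.succ.castSucc) - g i.castSucc.castSucc)
        = g (Fin.last m).castSucc - g 0 from by simpa using h]
    rw [Fin.succ_last]
    simp

lemma posSemidef_vecMulVec {n : ℕ} (u : Fin n → ℝ) : (vecMulVec u u).PosSemidef := by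
  refine PosSemidef.of_dotProduct_mulVec_nonneg ?_ ?_
  · ext i j
    simp [vecMulVec_apply, mul_comm]
  · intro x
    have : star x ⬝ᵥ (vecMulVec u u *ᵥ x) = (u ⬝ᵥ x) ^ 2 := by
      simp only [star_trivial, dotProduct, mulVec, vecMulVec_apply, sq]
      rw [Finset.sum_mul_sum]
      refine Finset.sum_congr rfl fun i _ => ?_
      rw [Finset.mul_sum]
      exact Finset.sum_congr rfl fun j _ => by ring
    rw [this]
    positivity

lemma det_rank_one {n : ℕ} {A : Matrix (Fin n) (Fin n) ℝ} (hA : A.PosDef) (u : Fin n → ℝ) :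
    (A + vecMulVec u u).det = A.det * (1 + u ⬝ᵥ (A⁻¹ *ᵥ u)) := by
  have hU : IsUnit A.det := isUnit_iff_ne_zero.mpr (ne_of_gt hA.det_pos)
  rw [vecMulVec_eq Unit, det_add_replicateCol_mul_replicateRow hU]
  congr 1
  rw [det_unique]
  simp only [Matrix.add_apply, Matrix.one_apply_eq, Matrix.mul_apply, Matrix.replicateRow_apply,
    Matrix.replicateCol_apply, dotProduct, mulVec, Finset.sum_mul, Finset.mul_sum]
  congr 1
  rw [Finset.sum_comm]
  exact Finset.sum_congr rfl fun i _ => Finset.sum_congr rfl fun j _ => by ring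

lemma trace_vecMulVec' {n : ℕ} (u : Fin n → ℝ) : (vecMulVec u u).trace = u ⬝ᵥ u := by
  rw [vecMulVec_eq Unit, trace_replicateCol_mul_replicateRow]

lemma det_le_trace_pow {m : ℕ} {A : Matrix (Fin m) (Fin m) ℝ} (hA : A.PosSemidef) :
    A.det ≤ A.trace ^ m := by
  have hH : A.IsHermitian := hA.isHermitian
  have hdet : A.det = ∏ i, hH.eigenvalues i := by
    simpa using hH.det_eq_prod_eigenvalues
  have htr : A.trace = ∑ i, hH.eigenvalues i := by
    nth_rewrite 1 [hH.spectral_theorem]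
    rw [Unitary.conjStarAlgAut_apply, trace_mul_cycle]
    rw [show star (hH.eigenvectorUnitary : Matrix (Fin m) (Fin m) ℝ) *
        (hH.eigenvectorUnitary : Matrix (Fin m) (Fin m) ℝ) = 1 from
      (Matrix.mem_unitaryGroup_iff').mp (hH.eigenvectorUnitary).2, Matrix.one_mul,
      trace_diagonal]
    simp
  have hnn : ∀ i, 0 ≤ hH.eigenvalues i := hA.eigenvalues_nonneg
  rw [hdet, htr]
  calc ∏ i, hH.eigenvalues i ≤ ∏ _i : Fin m, (∑ j, hH.eigenvalues j) := by
        refine Finset.prod_le_prod (fun i _ => hnn i) (fun i _ => ?_)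
        exact Finset.single_le_sum (fun j _ => hnn j) (Finset.mem_univ i)
    _ = (∑ j, hH.eigenvalues j) ^ m := by
        rw [Finset.prod_const, Finset.card_univ, Fintype.card_fin]

lemma min_le_two_log {x : ℝ} (hx : 0 ≤ x) : min 1 x ≤ 2 * Real.log (1 + x) := by
  have hexp : Real.exp (1 / 2) < 2 := by
    have h1 : Real.exp (1/2 + 1/2) = Real.exp (1/2) * Real.exp (1/2) := Real.exp_add _ _
    norm_num at h1
    nlinarith [Real.exp_one_lt_d9, Real.exp_pos (1/2)]
  rcases le_or_gt x 1 with h | h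
  · have hconv := convexOn_exp.2 (Set.mem_univ (0:ℝ)) (Set.mem_univ ((1:ℝ)/2))
      (by linarith : (0:ℝ) ≤ 1 - x) hx (by ring)
    simp only [smul_eq_mul, mul_zero, zero_add, Real.exp_zero, mul_one] at hconv
    have h2 : Real.exp (x / 2) ≤ 1 + x := by
      have : x * (1/2) = x / 2 := by ring
      rw [this] at hconv
      nlinarith
    have h3 : x / 2 ≤ Real.log (1 + x) := by
      rw [Real.le_log_iff_exp_le (by linarith)]
      exact h2
    rw [min_eq_right h]
    linarith
  · rw [min_eq_left h.le]
    have h3 : Real.log 2 ≤ Real.log (1 + x) :=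
      Real.log_le_log (by norm_num) (by linarith)
    have h4 : (1:ℝ)/2 ≤ Real.log 2 := by
      rw [Real.le_log_iff_exp_le (by norm_num)]
      linarith
    linarith

/-- quantitative form of Lemma le:ucb00:
`∑_t min{1, √(p̃_tᵀ Λ_t⁻¹ p̃_t)} ≤ √(2 τ (N+1) ln(N + 1 + p̄² τ))`. -/
theorem stmt9 (N τ : ℕ) (hN : 1 ≤ N) (hτ : 1 ≤ τ) (pb : ℝ) (hpb : 1 ≤ pb)
    (pt : Fin τ → Fin (N + 1) → ℝ)
    (hpt : ∀ t, pt t ⬝ᵥ pt t ≤ ((N : ℝ) + 1) * pb ^ 2)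
    (Λ : Fin (τ + 1) → Matrix (Fin (N + 1)) (Fin (N + 1)) ℝ)
    (hΛ0 : Λ 0 = ((N : ℝ) + 1) • (1 : Matrix (Fin (N + 1)) (Fin (N + 1)) ℝ))
    (hΛs : ∀ t : Fin τ, Λ t.succ = Λ t.castSucc + Matrix.vecMulVec (pt t) (pt t)) :
    ∑ t : Fin τ, min 1 (Real.sqrt (pt t ⬝ᵥ ((Λ t.castSucc)⁻¹ *ᵥ pt t))) ≤
      Real.sqrt (2 * τ * ((N : ℝ) + 1) * Real.log ((N : ℝ) + 1 + pb ^ 2 * τ)) := by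
  classical
  set n1 : ℝ := (N : ℝ) + 1 with hn1
  have hn1pos : 0 < n1 := by positivity
  -- all Λ's are positive definite
  have key : ∀ k (hk : k < τ + 1), (Λ ⟨k, hk⟩).PosDef := by
    intro k
    induction k with
    | zero =>
      intro hk
      have h0 : (⟨0, hk⟩ : Fin (τ + 1)) = 0 := rfl
      rw [h0, hΛ0, smul_one_eq_diagonal]
      exact posDef_diagonal_iff.mpr fun _ => hn1pos
    | succ k ih =>
      intro hk
      have hkτ : k < τ := by omega
      have hs := hΛs ⟨k, hkτ⟩
      have e1 : (⟨k, hkτ⟩ : Fin τ).succ = ⟨k + 1, hk⟩ := rfl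
      have e2 : (⟨k, hkτ⟩ : Fin τ).castSucc = ⟨k, by omega⟩ := rfl
      rw [e1, e2] at hs
      rw [hs]
      exact (ih (by omega)).add_posSemidef (posSemidef_vecMulVec _)
  have hPD : ∀ s : Fin (τ + 1), (Λ s).PosDef := fun s => by
    have := key s.1 s.2
    simpa using this
  set q : Fin τ → ℝ := fun t => pt t ⬝ᵥ ((Λ t.castSucc)⁻¹ *ᵥ pt t) with hq
  have hq0 : ∀ t, 0 ≤ q t := fun t => by
    have h := ((hPD t.castSucc).inv.posSemidef).dotProduct_mulVec_nonneg (pt t)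
    simpa using h
  -- log-det telescope
  set g : Fin (τ + 1) → ℝ := fun s => Real.log (Λ s).det with hg
  have hlog : ∀ t : Fin τ, Real.log (1 + q t) = g t.succ - g t.castSucc := by
    intro t
    have hd := det_rank_one (hPD t.castSucc) (pt t)
    rw [← hΛs t] at hd
    have h1 : (0 : ℝ) < (Λ t.castSucc).det := (hPD t.castSucc).det_pos
    have h2 : (0 : ℝ) < 1 + q t := by have := hq0 t; linarith
    simp only [hg]
    rw [hd, Real.log_mul (ne_of_gt h1) (ne_of_gt h2)]
    ring
  have htel : ∑ t : Fin τ, Real.log (1 + q t) = g (Fin.last τ) - g 0 := by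
    rw [Finset.sum_congr rfl fun t _ => hlog t]
    exact fin_telescope g
  -- trace bounds
  have htrace : ∀ k (hk : k < τ + 1),
      (Λ ⟨k, hk⟩).trace ≤ n1 * n1 + k * (n1 * pb ^ 2) := by
    intro k
    induction k with
    | zero =>
      intro hk
      have h0 : (⟨0, hk⟩ : Fin (τ + 1)) = 0 := rfl
      rw [h0, hΛ0, trace_smul, trace_one]
      simp only [smul_eq_mul, Fintype.card_fin, Nat.cast_zero, zero_mul, add_zero]
      push_cast
      rw [hn1]
    | succ k ih =>
      intro hk
      have hkτ : k < τ := by omega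
      have hs := hΛs ⟨k, hkτ⟩
      have e1 : (⟨k, hkτ⟩ : Fin τ).succ = ⟨k + 1, hk⟩ := rfl
      have e2 : (⟨k, hkτ⟩ : Fin τ).castSucc = ⟨k, by omega⟩ := rfl
      rw [e1, e2] at hs
      rw [hs, trace_add, trace_vecMulVec']
      have h1 := ih (by omega)
      have h2 := hpt ⟨k, hkτ⟩
      push_cast
      linarith
  have htrace_lb : ∀ k (hk : k < τ + 1), n1 * n1 ≤ (Λ ⟨k, hk⟩).trace := by
    intro k
    induction k with
    | zero =>
      intro hk
      have h0 : (⟨0, hk⟩ : Fin (τ + 1)) = 0 := rfl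
      rw [h0, hΛ0, trace_smul, trace_one]
      simp only [smul_eq_mul, Fintype.card_fin]
      push_cast
      rw [hn1]
    | succ k ih =>
      intro hk
      have hkτ : k < τ := by omega
      have hs := hΛs ⟨k, hkτ⟩
      have e1 : (⟨k, hkτ⟩ : Fin τ).succ = ⟨k + 1, hk⟩ := rfl
      have e2 : (⟨k, hkτ⟩ : Fin τ).castSucc = ⟨k, by omega⟩ := rfl
      rw [e1, e2] at hs
      rw [hs, trace_add, trace_vecMulVec']
      have h1 := ih (by omega)
      have h2 : (0 : ℝ) ≤ pt ⟨k, hkτ⟩ ⬝ᵥ pt ⟨k, hkτ⟩ :=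
        Finset.sum_nonneg fun i _ => mul_self_nonneg _
      linarith
  have hlast_eq : (Fin.last τ) = (⟨τ, by omega⟩ : Fin (τ + 1)) := rfl
  have htr_last : (Λ (Fin.last τ)).trace ≤ n1 * (n1 + pb ^ 2 * τ) := by
    have h := htrace τ (by omega)
    rw [← hlast_eq] at h
    nlinarith [h]
  have htr_pos : 0 < (Λ (Fin.last τ)).trace := by
    have h := htrace_lb τ (by omega)
    rw [← hlast_eq] at h
    nlinarith
  set L : ℝ := Real.log (n1 + pb ^ 2 * τ) with hL
  have harg : (1 : ℝ) ≤ n1 + pb ^ 2 * τ := by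
    have : (0 : ℝ) ≤ pb ^ 2 * τ := by positivity
    linarith
  have hLnn : 0 ≤ L := Real.log_nonneg harg
  have hglast : g (Fin.last τ) ≤ n1 * (Real.log n1 + L) := by
    have hdet_le : (Λ (Fin.last τ)).det ≤ (Λ (Fin.last τ)).trace ^ (N + 1) :=
      det_le_trace_pow (hPD _).posSemidef
    have h1 : g (Fin.last τ) ≤ Real.log ((Λ (Fin.last τ)).trace ^ (N + 1)) :=
      Real.log_le_log (hPD _).det_pos hdet_le
    rw [Real.log_pow] at h1
    have h2 : Real.log ((Λ (Fin.last τ)).trace) ≤ Real.log (n1 * (n1 + pb ^ 2 * τ)) :=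
      Real.log_le_log htr_pos htr_last
    rw [Real.log_mul (ne_of_gt hn1pos) (by linarith : n1 + pb ^ 2 * τ ≠ 0)] at h2
    have hcast : ((N + 1 : ℕ) : ℝ) = n1 := by push_cast; rw [hn1]
    rw [hcast] at h1
    nlinarith [h1, h2]
  have hg0 : g 0 = n1 * Real.log n1 := by
    simp only [hg, hΛ0, det_smul, det_one, mul_one, Fintype.card_fin]
    rw [Real.log_pow]
    push_cast
    rw [hn1]
  have hsum_log : ∑ t : Fin τ, Real.log (1 + q t) ≤ n1 * L := by
    rw [htel, hg0]
    have : n1 * (Real.log n1 + L) - n1 * Real.log n1 = n1 * L := by ring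
    linarith [hglast]
  have hsum_min : ∑ t : Fin τ, min 1 (q t) ≤ 2 * (n1 * L) := by
    calc ∑ t : Fin τ, min 1 (q t) ≤ ∑ t : Fin τ, 2 * Real.log (1 + q t) :=
          Finset.sum_le_sum fun t _ => min_le_two_log (hq0 t)
      _ = 2 * ∑ t : Fin τ, Real.log (1 + q t) := by rw [Finset.mul_sum]
      _ ≤ 2 * (n1 * L) := by linarith
  -- Cauchy–Schwarz
  have hmin_sqrt : ∀ t, min 1 (Real.sqrt (q t)) = Real.sqrt (min 1 (q t)) := by
    intro t
    rcases le_total (q t) 1 with h | h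
    · rw [min_eq_right h, min_eq_right (Real.sqrt_le_one.mpr h)]
    · rw [min_eq_left (Real.one_le_sqrt.mpr h), min_eq_left h, Real.sqrt_one]
  have hmin_nn : ∀ t : Fin τ, 0 ≤ min 1 (q t) := fun t => le_min zero_le_one (hq0 t)
  have hCS : ∑ t : Fin τ, Real.sqrt (min 1 (q t)) ≤
      Real.sqrt (∑ t : Fin τ, min 1 (q t)) * Real.sqrt τ := by
    have h := Real.sum_sqrt_mul_sqrt_le (Finset.univ : Finset (Fin τ))
      (f := fun t => min 1 (q t)) (g := fun _ => (1 : ℝ)) hmin_nn (fun _ => zero_le_one)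
    simpa using h
  have hsum_min_nn : 0 ≤ ∑ t : Fin τ, min 1 (q t) := Finset.sum_nonneg fun t _ => hmin_nn t
  calc ∑ t : Fin τ, min 1 (Real.sqrt (q t)) = ∑ t : Fin τ, Real.sqrt (min 1 (q t)) :=
        Finset.sum_congr rfl fun t _ => hmin_sqrt t
    _ ≤ Real.sqrt (∑ t : Fin τ, min 1 (q t)) * Real.sqrt τ := hCS
    _ ≤ Real.sqrt (2 * (n1 * L)) * Real.sqrt τ := by
        exact mul_le_mul_of_nonneg_right (Real.sqrt_le_sqrt hsum_min) (Real.sqrt_nonneg _)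
    _ = Real.sqrt (2 * (n1 * L) * τ) := by
        rw [← Real.sqrt_mul (by positivity : (0:ℝ) ≤ 2 * (n1 * L))]
    _ = Real.sqrt (2 * τ * n1 * L) := by
        congr 1
        ring
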